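/- For any non-decreasing Boolean function f : {0,1}^n → {0,1}, the expected size of its pivotal set under the Bernoulli(p) product measure satisfies E(|P(f)|) ≤ √(n·E(f)/(p(1−p))). -/

import Mathlib

open Finset Real

/-- The Bernoulli(p) product weight of a configuration `ω ∈ {0,1}^n`. -/
def W (n : ℕ) (p : ℝ) (ω : Fin n → Bool) : ℝ :=
  ∏ i, if ω i then p else 1 - p

/-- Expectation of `g` under the Bernoulli(p) product measure on `{0,1}^n`. -/
def Ex (n : ℕ) (p : ℝ) (g : (Fin n → Bool) → ℝ) : ℝ :=
  ∑ ω : Fin n → Bool, g ω * W n p ω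

/-- `ω` with its `i`-th coordinate set to `1`. -/
def up1 {n : ℕ} (ω : Fin n → Bool) (i : Fin n) : Fin n → Bool :=
  Function.update ω i true

/-- `ω` with its `i`-th coordinate set to `0`. -/
def up0 {n : ℕ} (ω : Fin n → Bool) (i : Fin n) : Fin n → Bool :=
  Function.update ω i false

/-- The random variable `X i (ω) = ω(i)/p − (1−ω(i))/(1−p)`. -/
noncomputable def X (n : ℕ) (p : ℝ) (i : Fin n) (ω : Fin n → Bool) : ℝ :=
  (if ω i then (1:ℝ) else 0) / p - (1 - if ω i then (1:ℝ) else 0) / (1 - p)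

/-- `S_n = X_1 + ⋯ + X_n`. -/
noncomputable def Sn (n : ℕ) (p : ℝ) (ω : Fin n → Bool) : ℝ :=
  ∑ i, X n p i ω

/-- The set of pivotal coordinates of `f` at `ω`. -/
def pivSet {n : ℕ} (f : (Fin n → Bool) → Bool) (ω : Fin n → Bool) : Finset (Fin n) :=
  Finset.univ.filter fun i => f (up1 ω i) ≠ f (up0 ω i)

/-- The real value of a Boolean function. -/
def fval {n : ℕ} (f : (Fin n → Bool) → Bool) (ω : Fin n → Bool) : ℝ :=
  if f ω then 1 else 0

/-- Probability of an event under the Bernoulli(p) product measure. -/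
def Pr (n : ℕ) (p : ℝ) (A : (Fin n → Bool) → Prop) [DecidablePred A] : ℝ :=
  ∑ ω ∈ Finset.univ.filter A, W n p ω

/-- `f` is non-decreasing. -/
def Mono {n : ℕ} (f : (Fin n → Bool) → Bool) : Prop :=
  ∀ (ω : Fin n → Bool) (i : Fin n), f (up0 ω i) ≤ f (up1 ω i)

-- helper lemmas
lemma W_nonneg (n : ℕ) (p : ℝ) (h0 : 0 ≤ p) (h1 : p ≤ 1) (ω : Fin n → Bool) :
    0 ≤ W n p ω := by
  apply Finset.prod_nonneg
  intro i _
  split <;> linarith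

lemma W_split (n : ℕ) (p : ℝ) (i : Fin n) (ω : Fin n → Bool) :
    W n p ω = (if ω i then p else 1 - p) *
      ∏ j ∈ Finset.univ.erase i, (if ω j then p else 1 - p) :=
  (Finset.mul_prod_erase Finset.univ _ (Finset.mem_univ i)).symm

lemma R_update (n : ℕ) (p : ℝ) (i : Fin n) (ω : Fin n → Bool) (b : Bool) :
    (∏ j ∈ Finset.univ.erase i, (if Function.update ω i b j then p else 1 - p)) =
      ∏ j ∈ Finset.univ.erase i, (if ω j then p else 1 - p) := by
  refine Finset.prod_congr rfl fun j hj => ?_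
  rw [Function.update_of_ne (Finset.mem_erase.1 hj).1]

lemma key (n : ℕ) (p : ℝ) (i : Fin n) (g : (Fin n → Bool) → ℝ)
    (hg : ∀ ω, p * g (Function.update ω i true) + (1 - p) * g (Function.update ω i false) = 0) :
    Ex n p g = 0 := by
  unfold Ex
  apply Finset.sum_ninvolution (fun ω => Function.update ω i (!(ω i)))
  · intro ω
    rcases h : ω i with _ | _
    · -- ω i = false
      have hω : Function.update ω i false = ω := by rw [← h]; exact Function.update_eq_self i ω
      simp only [Bool.not_false]
      rw [W_split n p i ω, W_split n p i (Function.update ω i true), R_update,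
        Function.update_self, h]
      have := hg ω
      rw [hω] at this
      norm_num
      linear_combination (∏ j ∈ Finset.univ.erase i, if ω j = true then p else 1 - p) * this
    · have hω : Function.update ω i true = ω := by rw [← h]; exact Function.update_eq_self i ω
      simp only [Bool.not_true]
      rw [W_split n p i ω, W_split n p i (Function.update ω i false), R_update,
        Function.update_self, h]
      have := hg ω
      rw [hω] at this
      norm_num
      linear_combination (∏ j ∈ Finset.univ.erase i, if ω j = true then p else 1 - p) * this
  · intro ω _ heq
    have := congrFun heq i
    rw [Function.update_self] at this
    exact (Bool.not_ne_self (ω i)) this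
  · intro ω; exact Finset.mem_univ _
  · intro ω
    funext j
    by_cases hj : j = i
    · subst hj; simp [Function.update_self]
    · simp [Function.update_of_ne hj]

lemma Ex_sum (n : ℕ) (p : ℝ) {ι : Type*} (s : Finset ι) (g : ι → (Fin n → Bool) → ℝ) :
    Ex n p (fun ω => ∑ i ∈ s, g i ω) = ∑ i ∈ s, Ex n p (g i) := by
  unfold Ex
  simp_rw [Finset.sum_mul]
  exact Finset.sum_comm

lemma Ex_sub (n : ℕ) (p : ℝ) (g h : (Fin n → Bool) → ℝ) :
    Ex n p (fun ω => g ω - h ω) = Ex n p g - Ex n p h := by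
  unfold Ex
  rw [← Finset.sum_sub_distrib]
  exact Finset.sum_congr rfl fun ω _ => by ring

lemma Ex_one (n : ℕ) (p : ℝ) : Ex n p (fun _ => 1) = 1 := by
  unfold Ex W
  simp only [one_mul]
  have := Finset.prod_univ_sum (fun _ : Fin n => (Finset.univ : Finset Bool))
    (fun _ b => if b then p else 1 - p)
  rw [Fintype.piFinset_univ] at this
  rw [← this]
  simp

lemma Ex_const (n : ℕ) (p : ℝ) (c : ℝ) : Ex n p (fun _ => c) = c := by
  have h := Ex_one n p
  unfold Ex at h ⊢
  simp only [one_mul] at h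
  calc (∑ ω : Fin n → Bool, c * W n p ω) = c * ∑ ω : Fin n → Bool, W n p ω := by
        rw [Finset.mul_sum]
    _ = c := by rw [h, mul_one]


section main
variable {n : ℕ} {p : ℝ}

lemma X_upd_true (hp0 : p ≠ 0) (hp1 : (1:ℝ) - p ≠ 0) (i : Fin n) (ω : Fin n → Bool) :
    X n p i (Function.update ω i true) = 1 / p := by
  simp [X, Function.update_self]

lemma X_upd_false (hp0 : p ≠ 0) (hp1 : (1:ℝ) - p ≠ 0) (i : Fin n) (ω : Fin n → Bool) :
    X n p i (Function.update ω i false) = -(1 / (1 - p)) := by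
  simp [X, Function.update_self]

lemma X_upd_ne (i j : Fin n) (hij : j ≠ i) (b : Bool) (ω : Fin n → Bool) :
    X n p j (Function.update ω i b) = X n p j ω := by
  simp [X, Function.update_of_ne hij]

lemma Ex_X_sq (hp0 : 0 < p) (hp1 : p < 1) (i : Fin n) :
    Ex n p (fun ω => X n p i ω ^ 2) = 1 / (p * (1 - p)) := by
  have hq : (1:ℝ) - p ≠ 0 := by linarith
  have hp : p ≠ 0 := ne_of_gt hp0
  have h0 : Ex n p (fun ω => X n p i ω ^ 2 - 1 / (p * (1 - p))) = 0 := by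
    apply key
    intro ω
    rw [X_upd_true hp hq, X_upd_false hp hq]
    field_simp
    ring
  rw [Ex_sub] at h0
  rw [Ex_const] at h0
  linarith

lemma Ex_X_mul (hp0 : 0 < p) (hp1 : p < 1) (i j : Fin n) (hij : j ≠ i) :
    Ex n p (fun ω => X n p i ω * X n p j ω) = 0 := by
  have hq : (1:ℝ) - p ≠ 0 := by linarith
  have hp : p ≠ 0 := ne_of_gt hp0
  apply key n p i
  intro ω
  rw [X_upd_true hp hq, X_upd_false hp hq, X_upd_ne i j hij, X_upd_ne i j hij]
  field_simp
  ring

lemma Ex_Sn_sq (hp0 : 0 < p) (hp1 : p < 1) :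
    Ex n p (fun ω => Sn n p ω ^ 2) = n / (p * (1 - p)) := by
  have h1 : ∀ ω, Sn n p ω ^ 2 = ∑ i : Fin n, ∑ j : Fin n, X n p i ω * X n p j ω := by
    intro ω
    rw [Sn, sq, Finset.sum_mul_sum]
  calc Ex n p (fun ω => Sn n p ω ^ 2)
      = Ex n p (fun ω => ∑ i : Fin n, ∑ j : Fin n, X n p i ω * X n p j ω) := by
        congr 1; funext ω; exact h1 ω
    _ = ∑ i : Fin n, ∑ j : Fin n, Ex n p (fun ω => X n p i ω * X n p j ω) := by
        rw [Ex_sum]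
        exact Finset.sum_congr rfl fun i _ => Ex_sum n p _ _
    _ = ∑ i : Fin n, (1 / (p * (1 - p))) := by
        refine Finset.sum_congr rfl fun i _ => ?_
        rw [Finset.sum_eq_single i]
        · rw [← Ex_X_sq hp0 hp1 i]; congr 1; funext ω; rw [sq]
        · intro j _ hji; exact Ex_X_mul hp0 hp1 i j hji
        · intro h; exact absurd (Finset.mem_univ i) h
    _ = n / (p * (1 - p)) := by
        rw [Finset.sum_const, Finset.card_univ, Fintype.card_fin, nsmul_eq_mul, mul_one_div]

end main

lemma card_eq_Ex (n : ℕ) (p : ℝ) (hp0 : 0 < p) (hp1 : p < 1)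
    (f : (Fin n → Bool) → Bool) (hf : Mono f) :
    Ex n p (fun ω => ((pivSet f ω).card : ℝ)) = Ex n p (fun ω => fval f ω * Sn n p ω) := by
  have hq : (1:ℝ) - p ≠ 0 := by linarith
  have hp : p ≠ 0 := ne_of_gt hp0
  have hpt : ∀ ω : Fin n → Bool,
      fval f ω * Sn n p ω - ((pivSet f ω).card : ℝ) =
        ∑ i : Fin n, (fval f ω * X n p i ω -
          (if f (up1 ω i) ≠ f (up0 ω i) then (1:ℝ) else 0)) := by
    intro ω
    rw [Finset.sum_sub_distrib, ← Finset.mul_sum]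
    congr 1
    rw [pivSet, Finset.card_filter]
    push_cast
    rfl
  have h0 : Ex n p (fun ω => fval f ω * Sn n p ω - ((pivSet f ω).card : ℝ)) = 0 := by
    calc Ex n p (fun ω => fval f ω * Sn n p ω - ((pivSet f ω).card : ℝ))
        = Ex n p (fun ω => ∑ i : Fin n, (fval f ω * X n p i ω -
            (if f (up1 ω i) ≠ f (up0 ω i) then (1:ℝ) else 0))) := by
          congr 1; funext ω; exact hpt ω
      _ = ∑ i : Fin n, Ex n p (fun ω => fval f ω * X n p i ω -
            (if f (up1 ω i) ≠ f (up0 ω i) then (1:ℝ) else 0)) := Ex_sum n p _ _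
      _ = 0 := by
          refine Finset.sum_eq_zero fun i _ => ?_
          apply key n p i
          intro ω
          have e1 : ∀ b, up1 (Function.update ω i b) i = up1 ω i := by
            intro b; simp [up1, Function.update_idem]
          have e0 : ∀ b, up0 (Function.update ω i b) i = up0 ω i := by
            intro b; simp [up0, Function.update_idem]
          rw [X_upd_true hp hq, X_upd_false hp hq, e1, e1, e0, e0]
          have hmono := hf ω i
          have hfv1 : fval f (Function.update ω i true) = fval f (up1 ω i) := rfl
          have hfv0 : fval f (Function.update ω i false) = fval f (up0 ω i) := rfl
          rw [hfv1, hfv0]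
          rcases h1 : f (up1 ω i) with _ | _ <;> rcases h0 : f (up0 ω i) with _ | _
          · simp only [h1, h0, ne_eq, not_true_eq_false, if_false, fval, if_false]
            field_simp
            norm_num
          · rw [h1, h0] at hmono; exact absurd hmono (by simp)
          · simp only [h1, h0, ne_eq, fval]
            norm_num
            field_simp
            ring
          · simp only [h1, h0, ne_eq, not_true_eq_false, if_false, fval, if_true]
            field_simp
            ring
  rw [Ex_sub] at h0
  linarith

theorem stmt4 (n : ℕ) (p : ℝ) (hp0 : 0 < p) (hp1 : p < 1)
    (f : (Fin n → Bool) → Bool) (hf : Mono f) :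
    Ex n p (fun ω => ((pivSet f ω).card : ℝ)) ≤
      Real.sqrt (n * Ex n p (fval f) / (p * (1 - p))) := by
  have hq : (0:ℝ) < 1 - p := by linarith
  have hWnn : ∀ ω : Fin n → Bool, 0 ≤ W n p ω := W_nonneg n p hp0.le hp1.le
  have hfnn : ∀ ω : Fin n → Bool, 0 ≤ fval f ω := by
    intro ω; unfold fval; split <;> norm_num
  have hExf : 0 ≤ Ex n p (fval f) :=
    Finset.sum_nonneg fun ω _ => mul_nonneg (hfnn ω) (hWnn ω)
  have hExc : 0 ≤ Ex n p (fun ω => ((pivSet f ω).card : ℝ)) :=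
    Finset.sum_nonneg fun ω _ => mul_nonneg (Nat.cast_nonneg _) (hWnn ω)
  have hA := card_eq_Ex n p hp0 hp1 f hf
  have hB := Ex_Sn_sq hp0 hp1 (n := n)
  -- Cauchy–Schwarz
  have hCS : (Ex n p (fun ω => fval f ω * Sn n p ω)) ^ 2 ≤
      Ex n p (fval f) * Ex n p (fun ω => Sn n p ω ^ 2) := by
    have h := Finset.sum_mul_sq_le_sq_mul_sq Finset.univ
      (fun ω : Fin n → Bool => fval f ω * Real.sqrt (W n p ω))
      (fun ω : Fin n → Bool => Sn n p ω * Real.sqrt (W n p ω))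
    have e1 : ∀ ω : Fin n → Bool,
        (fval f ω * Real.sqrt (W n p ω)) * (Sn n p ω * Real.sqrt (W n p ω)) =
          fval f ω * Sn n p ω * W n p ω := by
      intro ω
      have := Real.mul_self_sqrt (hWnn ω)
      linear_combination (fval f ω * Sn n p ω) * this
    have e2 : ∀ ω : Fin n → Bool,
        (fval f ω * Real.sqrt (W n p ω)) ^ 2 = fval f ω * W n p ω := by
      intro ω
      have h1 := Real.sq_sqrt (hWnn ω)
      have h2 : fval f ω ^ 2 = fval f ω := by unfold fval; split <;> norm_num
      rw [mul_pow, h1, h2]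
    have e3 : ∀ ω : Fin n → Bool,
        (Sn n p ω * Real.sqrt (W n p ω)) ^ 2 = Sn n p ω ^ 2 * W n p ω := by
      intro ω
      rw [mul_pow, Real.sq_sqrt (hWnn ω)]
    simp only [e1, e2, e3] at h
    exact h
  rw [hA]
  rw [Real.le_sqrt (hA ▸ hExc) (by positivity)]
  calc (Ex n p (fun ω => fval f ω * Sn n p ω)) ^ 2
      ≤ Ex n p (fval f) * Ex n p (fun ω => Sn n p ω ^ 2) := hCS
    _ = Ex n p (fval f) * (n / (p * (1 - p))) := by rw [hB]
    _ = n * Ex n p (fval f) / (p * (1 - p)) := by ring
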